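/- Let g>0, θ∈ℝ, γ>1, k>0, ρ₀>0, let S, Z : ℝ→ℝ be C¹ with S>0, and let I₁, I₂, h_w be C¹ functions satisfying the geometric identity ∂ₓ[I₁] = I₂ + A·∂ₓ[h_w]. Suppose M, A : ℝ×ℝ→ℝ are C¹, time-independent, with M>0, A>0, S−A>0, and set D ≡ 0, Q ≡ 0 (i.e. u = v = 0) and c_a² = kγ(ρ₀M/(S−A))^{γ−1}. If there are constants c₁, c₂ such that h_w cosθ + Z + M c_a²/(gγ(S−A)) = c₁ and c_a²/(γ−1) = c₂ everywhere, then (M, D, A, Q) is a stationary solution of the two-layer system: ∂ₜM+∂ₓD=0; ∂ₜD+∂ₓ(D²/M + M c_a²/γ) = (M c_a²/(γ(S−A)))∂ₓ(S−A); ∂ₜA+∂ₓQ=0; ∂ₜQ+∂ₓ(Q²/A + g I₁ cosθ + A M c_a²/(γ(S−A))) = −gA∂ₓZ + g I₂ cosθ + (M c_a²/(γ(S−A)))∂ₓA. -/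

import Mathlib

open Real MeasureTheory

/-- Partial derivative with respect to the first (time) variable. -/
noncomputable def pt (f : ℝ → ℝ → ℝ) (t x : ℝ) : ℝ := deriv (fun s => f s x) t

/-- Partial derivative with respect to the second (space) variable. -/
noncomputable def px (f : ℝ → ℝ → ℝ) (t x : ℝ) : ℝ := deriv (fun y => f t y) x

lemma diffx_aux {f : ℝ → ℝ → ℝ} (h : ContDiff ℝ 1 (Function.uncurry f)) (t : ℝ) :
    Differentiable ℝ (fun y => f t y) := by
  have he : (fun y => f t y) = Function.uncurry f ∘ (fun y => ((t : ℝ), y)) := rfl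
  rw [he]
  exact (h.differentiable one_ne_zero).comp ((differentiable_const t).prodMk differentiable_id)

lemma pt_zero_aux {f : ℝ → ℝ → ℝ} (hf : ∀ t₁ t₂ x, f t₁ x = f t₂ x) (t x : ℝ) :
    pt f t x = 0 := by
  have he : (fun s => f s x) = fun _ => f 0 x := funext fun s => hf s 0 x
  rw [pt, he, deriv_const]

/-- the still air/water state (`u = v = 0`, constant water
piezometric-type head `h_w cos θ + Z + M c_a²/(gγ(S-A))` and constant air
enthalpy `c_a²/(γ-1)`) is a stationary solution of the two-layer system. -/
theorem still_state_is_stationary_solution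
    (g θ γ k ρ₀ : ℝ) (hg : 0 < g) (hγ : 1 < γ) (hk : 0 < k) (hρ₀ : 0 < ρ₀)
    (S Z : ℝ → ℝ) (hSreg : ContDiff ℝ 1 S) (hZreg : ContDiff ℝ 1 Z)
    (hSpos : ∀ x, 0 < S x)
    (I₁ I₂ hw : ℝ → ℝ → ℝ)
    (hI₁reg : ContDiff ℝ 1 (Function.uncurry I₁))
    (hI₂reg : ContDiff ℝ 1 (Function.uncurry I₂))
    (hhwreg : ContDiff ℝ 1 (Function.uncurry hw))
    (M A : ℝ → ℝ → ℝ)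
    (hMreg : ContDiff ℝ 1 (Function.uncurry M))
    (hAreg : ContDiff ℝ 1 (Function.uncurry A))
    (hMstat : ∀ t₁ t₂ x, M t₁ x = M t₂ x)
    (hAstat : ∀ t₁ t₂ x, A t₁ x = A t₂ x)
    (hMpos : ∀ t x, 0 < M t x) (hApos : ∀ t x, 0 < A t x)
    (hSA : ∀ t x, 0 < S x - A t x)
    (D Q : ℝ → ℝ → ℝ)
    (hD : ∀ t x, D t x = 0) (hQ : ∀ t x, Q t x = 0)
    (ca2 : ℝ → ℝ → ℝ)
    (hca2 : ∀ t x, ca2 t x = k * γ * (ρ₀ * M t x / (S x - A t x)) ^ (γ - 1))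
    (hLeibniz : ∀ t x, px I₁ t x = I₂ t x + A t x * px hw t x)
    (c₁ c₂ : ℝ)
    (hhead : ∀ t x, hw t x * Real.cos θ + Z x
        + M t x * ca2 t x / (g * γ * (S x - A t x)) = c₁)
    (henthalpy : ∀ t x, ca2 t x / (γ - 1) = c₂) :
    (∀ t x, pt M t x + px D t x = 0)
    ∧ (∀ t x,
        pt D t x + px (fun t x => D t x ^ 2 / M t x + M t x * ca2 t x / γ) t x
          = M t x * ca2 t x / (γ * (S x - A t x))
              * px (fun t x => S x - A t x) t x)
    ∧ (∀ t x, pt A t x + px Q t x = 0)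
    ∧ (∀ t x,
        pt Q t x + px (fun t x => Q t x ^ 2 / A t x + g * I₁ t x * Real.cos θ
            + A t x * (M t x * ca2 t x / (γ * (S x - A t x)))) t x
          = -g * A t x * deriv Z x + g * I₂ t x * Real.cos θ
            + M t x * ca2 t x / (γ * (S x - A t x)) * px A t x) := by

  have hγ1 : γ - 1 ≠ 0 := sub_ne_zero.mpr (ne_of_gt hγ)
  have hkγ : k * γ ≠ 0 := by positivity
  -- the sound speed is constant
  have hca2c : ∀ t x, ca2 t x = (γ - 1) * c₂ := by
    intro t x
    have h := henthalpy t x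
    field_simp at h
    linarith
  -- the ratio r = ρ₀ M / (S - A) is constant
  set C0 : ℝ := ρ₀ * M 0 0 / (S 0 - A 0 0) with hC0
  have hrconst : ∀ t x, ρ₀ * M t x / (S x - A t x) = C0 := by
    intro t x
    have e1 := (hca2 t x).symm.trans (hca2c t x)
    have e2 := (hca2 0 0).symm.trans (hca2c 0 0)
    have hpow : (ρ₀ * M t x / (S x - A t x)) ^ (γ - 1)
        = (ρ₀ * M 0 0 / (S 0 - A 0 0)) ^ (γ - 1) := by
      apply mul_left_cancel₀ hkγ
      calc k * γ * (ρ₀ * M t x / (S x - A t x)) ^ (γ - 1) = (γ - 1) * c₂ := e1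
        _ = k * γ * (ρ₀ * M 0 0 / (S 0 - A 0 0)) ^ (γ - 1) := e2.symm
    have h1 : (0:ℝ) ≤ ρ₀ * M t x / (S x - A t x) :=
      le_of_lt (div_pos (mul_pos hρ₀ (hMpos t x)) (hSA t x))
    have h2 : (0:ℝ) ≤ ρ₀ * M 0 0 / (S 0 - A 0 0) :=
      le_of_lt (div_pos (mul_pos hρ₀ (hMpos 0 0)) (hSA 0 0))
    exact Real.rpow_left_injOn hγ1 h1 h2 hpow
  set κ : ℝ := C0 * (γ - 1) * c₂ / (ρ₀ * γ) with hκ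
  have hMeq : ∀ t x, M t x = C0 / ρ₀ * (S x - A t x) := by
    intro t x
    have h := hrconst t x
    have hne : S x - A t x ≠ 0 := ne_of_gt (hSA t x)
    field_simp at h
    field_simp
    linarith
  have hP : ∀ t x, M t x * ca2 t x / (γ * (S x - A t x)) = κ := by
    intro t x
    rw [hMeq t x, hca2c t x, hκ]
    have hne : S x - A t x ≠ 0 := ne_of_gt (hSA t x)
    field_simp
  have hMC : ∀ t x, M t x * ca2 t x / γ = κ * (S x - A t x) := by
    intro t x
    have h := hP t x
    have hne : S x - A t x ≠ 0 := ne_of_gt (hSA t x)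
    have hγ0 : γ ≠ 0 := by positivity
    field_simp at h ⊢
    linarith
  -- constant reduced head
  have hhead2 : ∀ t x, hw t x * Real.cos θ + Z x = c₁ - κ / g := by
    intro t x
    have h := hhead t x
    have hne : S x - A t x ≠ 0 := ne_of_gt (hSA t x)
    have hMg : M t x * ca2 t x / (g * γ * (S x - A t x)) = κ / g := by
      rw [show g * γ * (S x - A t x) = γ * (S x - A t x) * g by ring, ← div_div, hP t x]
    rw [hMg] at h
    linarith
  have hZdiff : Differentiable ℝ Z := hZreg.differentiable one_ne_zero
  have hSdiff : Differentiable ℝ S := hSreg.differentiable one_ne_zero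
  refine ⟨?_, ?_, ?_, ?_⟩
  · intro t x
    have h1 : pt M t x = 0 := pt_zero_aux hMstat t x
    have h2 : px D t x = 0 := by
      have he : (fun y => D t y) = fun _ => (0:ℝ) := funext fun y => hD t y
      rw [px, he, deriv_const]
    rw [h1, h2]; ring
  · intro t x
    have h1 : pt D t x = 0 := pt_zero_aux (fun t₁ t₂ x => (hD t₁ x).trans (hD t₂ x).symm) t x
    have hfun : (fun y => D t y ^ 2 / M t y + M t y * ca2 t y / γ)
        = fun y => κ * (S y - A t y) := by
      funext y
      rw [hD t y, hMC t y]
      ring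
    have hdiff : Differentiable ℝ (fun y => S y - A t y) :=
      hSdiff.sub (diffx_aux hAreg t)
    have h2 : px (fun t x => D t x ^ 2 / M t x + M t x * ca2 t x / γ) t x
        = κ * deriv (fun y => S y - A t y) x := by
      have e : px (fun t x => D t x ^ 2 / M t x + M t x * ca2 t x / γ) t x
          = deriv (fun y => D t y ^ 2 / M t y + M t y * ca2 t y / γ) x := rfl
      rw [e, hfun, deriv_const_mul κ (hdiff x)]
    have h3 : px (fun t x => S x - A t x) t x = deriv (fun y => S y - A t y) x := rfl
    rw [h1, h2, h3, hP t x]; ring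
  · intro t x
    have h1 : pt A t x = 0 := pt_zero_aux hAstat t x
    have h2 : px Q t x = 0 := by
      have he : (fun y => Q t y) = fun _ => (0:ℝ) := funext fun y => hQ t y
      rw [px, he, deriv_const]
    rw [h1, h2]; ring
  · intro t x
    have h1 : pt Q t x = 0 := pt_zero_aux (fun t₁ t₂ x => (hQ t₁ x).trans (hQ t₂ x).symm) t x
    have hfun : (fun y => Q t y ^ 2 / A t y + g * I₁ t y * Real.cos θ
          + A t y * (M t y * ca2 t y / (γ * (S y - A t y))))
        = fun y => g * Real.cos θ * I₁ t y + κ * A t y := by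
      funext y
      rw [hQ t y, hP t y]
      ring
    have hI₁d : Differentiable ℝ (fun y => I₁ t y) := diffx_aux hI₁reg t
    have hAd : Differentiable ℝ (fun y => A t y) := diffx_aux hAreg t
    have h2 : px (fun t x => Q t x ^ 2 / A t x + g * I₁ t x * Real.cos θ
          + A t x * (M t x * ca2 t x / (γ * (S x - A t x)))) t x
        = g * Real.cos θ * px I₁ t x + κ * px A t x := by
      have e : px (fun t x => Q t x ^ 2 / A t x + g * I₁ t x * Real.cos θ
            + A t x * (M t x * ca2 t x / (γ * (S x - A t x)))) t x
          = deriv (fun y => Q t y ^ 2 / A t y + g * I₁ t y * Real.cos θ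
            + A t y * (M t y * ca2 t y / (γ * (S y - A t y)))) x := rfl
      rw [e, hfun]
      rw [deriv_fun_add ((hI₁d x).const_mul _) ((hAd x).const_mul _),
        deriv_const_mul _ (hI₁d x), deriv_const_mul _ (hAd x)]
      rfl
    -- from the constant head: cos θ * ∂ₓ hw = - Z'
    have hwx : px hw t x * Real.cos θ = -deriv Z x := by
      have he : (fun y => hw t y * Real.cos θ) = fun y => (c₁ - κ / g) - Z y := by
        funext y
        have := hhead2 t y
        linarith
      have hl : deriv (fun y => hw t y * Real.cos θ) x = px hw t x * Real.cos θ :=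
        deriv_mul_const (diffx_aux hhwreg t x) _
      rw [he, deriv_const_sub] at hl
      linarith
    rw [h1, h2, hLeibniz t x, hP t x]
    linear_combination (g * A t x) * hwx
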